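/- Let u be a bounded C² solution of the system Δu = ∇H(u) on ℝ^N with each |∇u_i| bounded, and suppose there are constants a = (a_1,…,a_m) such that for every x' ∈ ℝ^{N−1} and every i, u_i(x', x_N) → a_i as x_N → +∞. Set u^t(x', x_N) := u(x', x_N + t) and E_R(w) := ∫_{B_R} ( ½ Σ_i |∇w_i|² + H(w) − H(a) ) dx. Then for every fixed R > 0, lim_{t → +∞} E_R(u^t) = 0. -/

import Mathlib

open MeasureTheory Metric Filter Finset

noncomputable section

/-- Partial derivative of `f` at `x` in the `k`-th coordinate direction of `ℝ^N`. -/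
def pd {N : ℕ} (f : EuclideanSpace ℝ (Fin N) → ℝ) (k : Fin N)
    (x : EuclideanSpace ℝ (Fin N)) : ℝ :=
  fderiv ℝ f x (EuclideanSpace.single k 1)

/-- Laplacian of `f` at `x`: the sum of the pure second partial derivatives. -/
def lap {N : ℕ} (f : EuclideanSpace ℝ (Fin N) → ℝ) (x : EuclideanSpace ℝ (Fin N)) : ℝ :=
  ∑ k, pd (pd f k) k x

/-- `H_{u_i}`, the `i`-th partial derivative of `H : ℝ^m → ℝ`. -/
def Hp {m : ℕ} (H : EuclideanSpace ℝ (Fin m) → ℝ) (i : Fin m)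
    (p : EuclideanSpace ℝ (Fin m)) : ℝ :=
  fderiv ℝ H p (EuclideanSpace.single i 1)

/-- `H_{u_i u_j}`, the second mixed partial derivative of `H : ℝ^m → ℝ`. -/
def Hpp {m : ℕ} (H : EuclideanSpace ℝ (Fin m) → ℝ) (i j : Fin m)
    (p : EuclideanSpace ℝ (Fin m)) : ℝ :=
  fderiv ℝ (Hp H i) p (EuclideanSpace.single j 1)

/-- `u` solves the system `Δ u = ∇H(u)` on `Ω`. -/
def IsSolution {N m : ℕ} (H : EuclideanSpace ℝ (Fin m) → ℝ)
    (u : EuclideanSpace ℝ (Fin N) → EuclideanSpace ℝ (Fin m))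
    (Ω : Set (EuclideanSpace ℝ (Fin N))) : Prop :=
  ∀ i : Fin m, ∀ x ∈ Ω, lap (fun y => u y i) x = Hp H i (u x)

/-- `u` is a stable solution of `Δ u = ∇H(u)` on `Ω`: the second variation of the
energy is nonnegative on test functions `ζ_1, …, ζ_m ∈ C¹_c(Ω)`. -/
def Stable {N m : ℕ} (H : EuclideanSpace ℝ (Fin m) → ℝ)
    (u : EuclideanSpace ℝ (Fin N) → EuclideanSpace ℝ (Fin m))
    (Ω : Set (EuclideanSpace ℝ (Fin N))) : Prop :=
  ∀ ζ : Fin m → EuclideanSpace ℝ (Fin N) → ℝ,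
    (∀ i, ContDiff ℝ 1 (ζ i)) → (∀ i, HasCompactSupport (ζ i)) →
    (∀ i, tsupport (ζ i) ⊆ Ω) →
    0 ≤ (∑ i, ∫ x in Ω, ‖gradient (ζ i) x‖ ^ 2) +
        ∑ i, ∑ j, ∫ x in Ω, Hpp H i j (u x) * ζ i x * ζ j x

/-- `u` is a pointwise stable solution of `Δ u = ∇H(u)` on `Ω`: there are `λ ≥ 0`
and nowhere-vanishing `C²` functions `φ_i` with `Δ φ_i = Σ_j H_{u_i u_j}(u) φ_j - λ φ_i`
and `H_{u_i u_j}(u) φ_i φ_j ≤ 0` for `i < j`. -/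
def PointwiseStable {N m : ℕ} (H : EuclideanSpace ℝ (Fin m) → ℝ)
    (u : EuclideanSpace ℝ (Fin N) → EuclideanSpace ℝ (Fin m))
    (Ω : Set (EuclideanSpace ℝ (Fin N))) : Prop :=
  ∃ (lam : ℝ) (φ : Fin m → EuclideanSpace ℝ (Fin N) → ℝ),
    0 ≤ lam ∧ (∀ i, ContDiff ℝ 2 (φ i)) ∧ (∀ i, ∀ x ∈ Ω, φ i x ≠ 0) ∧
    (∀ i, ∀ x ∈ Ω, lap (φ i) x = (∑ j, Hpp H i j (u x) * φ j x) - lam * φ i x) ∧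
    (∀ i j : Fin m, i < j → ∀ x ∈ Ω, Hpp H i j (u x) * φ i x * φ j x ≤ 0)

/-- The system `Δ u = ∇H(u)` is orientable along `u`: there exist nonzero `C¹`
functions `θ_i`, none of which changes sign, with `H_{u_i u_j}(u) θ_i θ_j ≤ 0` for `i < j`. -/
def OrientableAlong {N m : ℕ} (H : EuclideanSpace ℝ (Fin m) → ℝ)
    (u : EuclideanSpace ℝ (Fin N) → EuclideanSpace ℝ (Fin m)) : Prop :=
  ∃ θ : Fin m → EuclideanSpace ℝ (Fin N) → ℝ,
    (∀ i, ContDiff ℝ 1 (θ i)) ∧ (∀ i, ∃ x, θ i x ≠ 0) ∧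
    (∀ i, (∀ x, 0 ≤ θ i x) ∨ (∀ x, θ i x ≤ 0)) ∧
    (∀ i j : Fin m, i < j → ∀ x, Hpp H i j (u x) * θ i x * θ j x ≤ 0)

/-- A function `w : ℝ^N → ℝ` is one-dimensional. -/
def OneDim {N : ℕ} (w : EuclideanSpace ℝ (Fin N) → ℝ) : Prop :=
  ∃ (a : EuclideanSpace ℝ (Fin N)) (g : ℝ → ℝ), ∀ x, w x = g (inner ℝ a x)

/-- `u` is an `H`-monotone solution with respect to the coordinate direction `ν`. -/
def HMonotone {N m : ℕ} (H : EuclideanSpace ℝ (Fin m) → ℝ)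
    (u : EuclideanSpace ℝ (Fin N) → EuclideanSpace ℝ (Fin m)) (ν : Fin N) : Prop :=
  (∀ (i : Fin m) (x : EuclideanSpace ℝ (Fin N)), pd (fun y => u y i) ν x ≠ 0) ∧
  (∀ i j : Fin m, i < j → ∀ x,
    Hpp H i j (u x) * (pd (fun y => u y i) ν x * pd (fun y => u y j) ν x) ≤ 0)

/-- The point `(x', t) ∈ ℝ^{n+1}` built from `x' ∈ ℝ^n` and a last coordinate `t`. -/
def snocPt {n : ℕ} (x' : EuclideanSpace ℝ (Fin n)) (t : ℝ) :
    EuclideanSpace ℝ (Fin (n + 1)) := WithLp.toLp 2 (Fin.snoc (α := fun _ => ℝ) x'.ofLp t)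


lemma integral_fderiv_apply_eq_zero {N : ℕ} {f : EuclideanSpace ℝ (Fin N) → ℝ}
    (hf : ContDiff ℝ 1 f) (h'f : HasCompactSupport f) (v : EuclideanSpace ℝ (Fin N)) :
    ∫ x, fderiv ℝ f x v = 0 := by
  obtain ⟨C, hC⟩ : ∃ C, LipschitzWith C f :=
    hf.lipschitzWith_of_hasCompactSupport h'f one_ne_zero
  have A := LipschitzWith.integral_inv_smul_sub_mul_tendsto_integral_lineDeriv_mul'
    (μ := volume) hC h'f continuous_const (g := fun _ => (1:ℝ)) v
  have hz : ∀ t : ℝ, (∫ x, (t⁻¹ • (f (x + t • v) - f x)) * (1:ℝ)) = 0 := by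
    intro t
    simp only [mul_one, smul_eq_mul]
    rw [integral_const_mul]
    have h1 : Integrable (fun x => f (x + t • v)) volume := by
      exact (hf.continuous.integrable_of_hasCompactSupport h'f).comp_add_right (t • v)
    rw [integral_sub h1 (hf.continuous.integrable_of_hasCompactSupport h'f),
      integral_add_right_eq_self f (t•v)]
    simp
  simp only [hz] at A
  have := tendsto_nhds_unique A tendsto_const_nhds
  rw [← this]
  apply integral_congr_ae
  filter_upwards with x
  rw [(hf.differentiable one_ne_zero).differentiableAt.lineDeriv_eq_fderiv, mul_one]


lemma continuous_pd {N : ℕ} {f : EuclideanSpace ℝ (Fin N) → ℝ} (hf : ContDiff ℝ 1 f)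
    (k : Fin N) : Continuous (pd f k) :=
  (hf.continuous_fderiv one_ne_zero).clm_apply continuous_const

lemma contDiff_pd {N : ℕ} {f : EuclideanSpace ℝ (Fin N) → ℝ} (hf : ContDiff ℝ 2 f)
    (k : Fin N) : ContDiff ℝ 1 (pd f k) :=
  (hf.fderiv_right (by norm_num)).clm_apply contDiff_const

lemma pd_mul {N : ℕ} {f g : EuclideanSpace ℝ (Fin N) → ℝ} {x : EuclideanSpace ℝ (Fin N)}
    (hf : DifferentiableAt ℝ f x) (hg : DifferentiableAt ℝ g x) (k : Fin N) :
    pd (fun y => f y * g y) k x = pd f k x * g x + f x * pd g k x := by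
  unfold pd
  rw [fderiv_fun_mul hf hg]
  simp only [ContinuousLinearMap.add_apply, ContinuousLinearMap.smul_apply, smul_eq_mul]
  ring

lemma pd_shift {N : ℕ} {f : EuclideanSpace ℝ (Fin N) → ℝ} {x c : EuclideanSpace ℝ (Fin N)}
    (hf : DifferentiableAt ℝ f (x + c)) (k : Fin N) :
    pd (fun y => f (y + c)) k x = pd f k (x + c) := by
  have h : HasFDerivAt (fun y => f (y + c)) (fderiv ℝ f (x + c)) x := by
    have := hf.hasFDerivAt.comp x ((hasFDerivAt_id x).add_const c)
    simp at this; exact this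
  unfold pd
  rw [h.fderiv]

lemma gradient_apply' {N : ℕ} {f : EuclideanSpace ℝ (Fin N) → ℝ} {x : EuclideanSpace ℝ (Fin N)}
    (k : Fin N) : gradient f x k = pd f k x := by
  have h1 : inner ℝ (gradient f x) (EuclideanSpace.single k (1:ℝ)) = pd f k x := by
    unfold gradient pd
    rw [← InnerProductSpace.toDual_apply_apply, LinearIsometryEquiv.apply_symm_apply]
  rw [← h1, EuclideanSpace.inner_single_right]
  simp only [one_mul, conj_trivial]

lemma norm_gradient_sq {N : ℕ} {f : EuclideanSpace ℝ (Fin N) → ℝ} {x : EuclideanSpace ℝ (Fin N)} :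
    ‖gradient f x‖ ^ 2 = ∑ k, (pd f k x) ^ 2 := by
  rw [← real_inner_self_eq_norm_sq]
  rw [PiLp.inner_apply]
  refine Finset.sum_congr rfl fun k _ => ?_
  rw [gradient_apply']
  simp [sq]

lemma abs_pd_le {N : ℕ} {f : EuclideanSpace ℝ (Fin N) → ℝ} {x : EuclideanSpace ℝ (Fin N)}
    (k : Fin N) : |pd f k x| ≤ ‖gradient f x‖ := by
  have h1 : pd f k x = inner ℝ (gradient f x) (EuclideanSpace.single k (1:ℝ)) := by
    unfold gradient pd
    rw [← InnerProductSpace.toDual_apply_apply, LinearIsometryEquiv.apply_symm_apply]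
  rw [h1]
  calc |inner ℝ (gradient f x) (EuclideanSpace.single k (1:ℝ))|
      ≤ ‖gradient f x‖ * ‖EuclideanSpace.single k (1:ℝ)‖ := abs_real_inner_le_norm _ _
    _ = ‖gradient f x‖ := by rw [EuclideanSpace.norm_single]; simp

lemma ibp_lemma {N : ℕ} {f w : EuclideanSpace ℝ (Fin N) → ℝ}
    (hf : ContDiff ℝ 1 f) (h'f : HasCompactSupport f) (hw : ContDiff ℝ 2 w) :
    ∫ x, ((∑ k, pd f k x * pd w k x) + f x * lap w x) = 0 := by
  have hFk : ∀ k : Fin N, ∫ x,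
      (pd f k x * pd w k x + f x * pd (pd w k) k x) = 0 := by
    intro k
    have hgk : ContDiff ℝ 1 (fun x => f x * pd w k x) := hf.mul (contDiff_pd hw k)
    have h'gk : HasCompactSupport (fun x => f x * pd w k x) := h'f.mul_right
    have h0 : ∫ x, pd (fun x => f x * pd w k x) k x = 0 :=
      integral_fderiv_apply_eq_zero hgk h'gk _
    rw [← h0]
    apply integral_congr_ae
    filter_upwards with x
    rw [pd_mul (hf.differentiable one_ne_zero x)
      (((contDiff_pd hw k).differentiable one_ne_zero) x) k]
  have hsupp : ∀ k : Fin N, HasCompactSupport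
      (fun x => pd f k x * pd w k x + f x * pd (pd w k) k x) := by
    intro k
    apply h'f.mono'
    intro x hx
    contrapose! hx
    have h1 : f x = 0 := image_eq_zero_of_notMem_tsupport hx
    have h2 : pd f k x = 0 := by
      have : fderiv ℝ f x = 0 := by
        by_contra h
        exact hx (support_fderiv_subset ℝ (Function.mem_support.2 h))
      simp [pd, this]
    simp [Function.mem_support, h1, h2]
  have hcont : ∀ k : Fin N, Continuous
      (fun x => pd f k x * pd w k x + f x * pd (pd w k) k x) := by
    intro k
    exact ((continuous_pd hf k).mul (continuous_pd (hw.of_le one_le_two) k)).add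
      (hf.continuous.mul (continuous_pd (contDiff_pd hw k) k))
  have := integral_finset_sum (μ := volume) (Finset.univ : Finset (Fin N))
    (f := fun k x => pd f k x * pd w k x + f x * pd (pd w k) k x)
    (fun k _ => ((hcont k).integrable_of_hasCompactSupport (hsupp k)))
  rw [Finset.sum_congr rfl (fun k _ => hFk k)] at this
  simp only [Finset.sum_const_zero] at this
  rw [← this]
  apply integral_congr_ae
  filter_upwards with x
  simp only [lap, Finset.mul_sum, Finset.sum_add_distrib]


lemma exists_unifBound {ι α : Type*} [Fintype ι] (g : ι → α → ℝ)
    (h : ∀ i, ∃ B, ∀ x, |g i x| ≤ B) : ∃ B, 0 ≤ B ∧ ∀ i x, |g i x| ≤ B := by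
  choose B hB using h
  refine ⟨∑ i, |B i|, Finset.sum_nonneg fun _ _ => abs_nonneg _, fun i x => ?_⟩
  calc |g i x| ≤ B i := hB i x
    _ ≤ |B i| := le_abs_self _
    _ ≤ ∑ j, |B j| := Finset.single_le_sum (f := fun j => |B j|)
        (fun _ _ => abs_nonneg _) (Finset.mem_univ i)

lemma euclid_norm_sq {m : ℕ} (p : EuclideanSpace ℝ (Fin m)) : ‖p‖ ^ 2 = ∑ i, (p i) ^ 2 := by
  rw [← real_inner_self_eq_norm_sq, PiLp.inner_apply]
  refine Finset.sum_congr rfl fun k _ => ?_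
  simp [sq]

lemma Hp_eq_pd {m : ℕ} (H : EuclideanSpace ℝ (Fin m) → ℝ) (i : Fin m) : Hp H i = pd H i := rfl

set_option maxHeartbeats 1000000 in
/-- if `u(x', x_N) → a` as `x_N → +∞`, then the energy of the shifted
solution `u^t` over any fixed ball tends to `0` as `t → +∞`. -/
theorem stmt_14 (n m : ℕ)
    (H : EuclideanSpace ℝ (Fin m) → ℝ) (hH : ContDiff ℝ 2 H)
    (u : EuclideanSpace ℝ (Fin (n + 1)) → EuclideanSpace ℝ (Fin m)) (hu : ContDiff ℝ 2 u)
    (hbd : ∀ i : Fin m, ∃ B : ℝ, ∀ x, |u x i| ≤ B)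
    (hgradbd : ∀ i : Fin m, ∃ B : ℝ, ∀ x, ‖gradient (fun y => u y i) x‖ ≤ B)
    (hsol : IsSolution H u Set.univ)
    (a : EuclideanSpace ℝ (Fin m))
    (hlim : ∀ (x' : EuclideanSpace ℝ (Fin n)) (i : Fin m),
      Tendsto (fun s : ℝ => u (snocPt x' s) i) atTop (nhds (a i)))
    (R : ℝ) (hR : 0 < R) :
    Tendsto (fun t : ℝ => ∫ x in ball (0 : EuclideanSpace ℝ (Fin (n + 1))) R,
        ((1 / 2) * ∑ i, ‖gradient
            (fun y => u (y + t • EuclideanSpace.single (Fin.last n) (1 : ℝ)) i) x‖ ^ 2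
          + H (u (x + t • EuclideanSpace.single (Fin.last n) (1 : ℝ))) - H a))
      atTop (nhds 0) := by
  classical
  set e : EuclideanSpace ℝ (Fin (n + 1)) := EuclideanSpace.single (Fin.last n) (1 : ℝ) with he
  -- basic smoothness
  have hui : ∀ i : Fin m, ContDiff ℝ 2 (fun y => u y i) := fun i =>
    (ContinuousLinearMap.contDiff (EuclideanSpace.proj (𝕜 := ℝ) i)).comp hu
  have hshift : ∀ t : ℝ, ContDiff ℝ 2 (fun x : EuclideanSpace ℝ (Fin (n + 1)) => x + t • e) :=
    fun t => contDiff_id.add contDiff_const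
  have hw : ∀ (t : ℝ) (i : Fin m), ContDiff ℝ 2 (fun x => u (x + t • e) i) :=
    fun t i => (hui i).comp (hshift t)
  have hpdw : ∀ (t : ℝ) (i : Fin m) (k : Fin (n + 1)) (x : EuclideanSpace ℝ (Fin (n + 1))),
      pd (fun y => u (y + t • e) i) k x = pd (fun y => u y i) k (x + t • e) := fun t i k x =>
    pd_shift (((hui i).differentiable two_ne_zero) _) k
  have hlapw : ∀ (t : ℝ) (i : Fin m) (x : EuclideanSpace ℝ (Fin (n + 1))),
      lap (fun y => u (y + t • e) i) x = Hp H i (u (x + t • e)) := by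
    intro t i x
    have h2 : ∀ k, pd (pd (fun y => u (y + t • e) i) k) k x
        = pd (pd (fun y => u y i) k) k (x + t • e) := by
      intro k
      have hfun : pd (fun y => u (y + t • e) i) k
          = fun z => pd (fun y => u y i) k (z + t • e) := funext fun z => hpdw t i k z
      rw [hfun]
      exact pd_shift (((contDiff_pd (hui i) k).differentiable one_ne_zero) _) k
    have hs := hsol i (x + t • e) (Set.mem_univ _)
    unfold lap at hs ⊢
    rw [Finset.sum_congr rfl fun k _ => h2 k]
    exact hs
  -- bounds
  obtain ⟨Bu, hBu0, hBu⟩ : ∃ B, 0 ≤ B ∧ ∀ (i : Fin m) x, |u x i| ≤ B :=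
    exists_unifBound (fun i x => u x i) hbd
  obtain ⟨Bg, hBg0, hBg⟩ : ∃ B, 0 ≤ B ∧ ∀ (i : Fin m) x,
      |‖gradient (fun y => u y i) x‖| ≤ B := by
    refine exists_unifBound _ fun i => ?_
    obtain ⟨B, hB⟩ := hgradbd i
    exact ⟨B, fun x => by rw [abs_of_nonneg (norm_nonneg _)]; exact hB x⟩
  have hpdu : ∀ (i : Fin m) (k : Fin (n + 1)) y, |pd (fun y' => u y' i) k y| ≤ Bg := by
    intro i k y
    refine (abs_pd_le k).trans ?_
    have := hBg i y
    rwa [abs_of_nonneg (norm_nonneg _)] at this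
  have hrange : ∀ x, u x ∈ closedBall (0 : EuclideanSpace ℝ (Fin m))
      (Real.sqrt (∑ _i : Fin m, Bu ^ 2)) := by
    intro x
    rw [mem_closedBall_zero_iff,
      show ‖u x‖ = Real.sqrt (‖u x‖ ^ 2) by rw [Real.sqrt_sq (norm_nonneg _)]]
    apply Real.sqrt_le_sqrt
    rw [euclid_norm_sq]
    refine Finset.sum_le_sum fun i _ => ?_
    rw [← sq_abs]
    exact pow_le_pow_left₀ (abs_nonneg _) (hBu i x) 2
  obtain ⟨BH, hBH0, hBH⟩ : ∃ B, 0 ≤ B ∧ ∀ (i : Fin m) x, |Hp H i (u x)| ≤ B := by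
    refine exists_unifBound _ fun i => ?_
    obtain ⟨C, hC⟩ := (isCompact_closedBall (0 : EuclideanSpace ℝ (Fin m))
        (Real.sqrt (∑ _i : Fin m, Bu ^ 2))).exists_bound_of_continuousOn
      (continuous_pd (hH.of_le one_le_two) i).continuousOn
    exact ⟨C, fun x => by
      rw [Hp_eq_pd, ← Real.norm_eq_abs]; exact hC _ (hrange x)⟩
  obtain ⟨BH2, hBH2⟩ : ∃ B, ∀ x, |H (u x)| ≤ B := by
    obtain ⟨C, hC⟩ := (isCompact_closedBall (0 : EuclideanSpace ℝ (Fin m))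
        (Real.sqrt (∑ _i : Fin m, Bu ^ 2))).exists_bound_of_continuousOn hH.continuous.continuousOn
    exact ⟨C, fun x => by rw [← Real.norm_eq_abs]; exact hC _ (hrange x)⟩
  -- cutoff function
  set ζb : ContDiffBump (0 : EuclideanSpace ℝ (Fin (n + 1))) := ⟨R, R + 1, hR, by linarith⟩
    with hζb
  set ζ : EuclideanSpace ℝ (Fin (n + 1)) → ℝ := fun x => ζb x with hζdef
  have hζsm : ContDiff ℝ 2 ζ := ζb.contDiff
  have hζcs : HasCompactSupport ζ := ζb.hasCompactSupport
  have hζ1 : ∀ x ∈ closedBall (0 : EuclideanSpace ℝ (Fin (n + 1))) R, ζ x = 1 := fun x hx =>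
    ζb.one_of_mem_closedBall hx
  have hζ0 : ∀ x, 0 ≤ ζ x := fun x => ζb.nonneg
  have hζle1 : ∀ x, ζ x ≤ 1 := fun x => ζb.le_one
  have hζd : Differentiable ℝ ζ := hζsm.differentiable two_ne_zero
  have hpdζ0 : ∀ (k : Fin (n + 1)) x, x ∉ tsupport ζ → pd ζ k x = 0 := by
    intro k x hx
    have : fderiv ℝ ζ x = 0 := by
      by_contra h
      exact hx (support_fderiv_subset ℝ (Function.mem_support.2 h))
    simp [pd, this]
  obtain ⟨Bζ, hBζ0, hBζ⟩ : ∃ B, 0 ≤ B ∧ ∀ (k : Fin (n + 1)) x, |pd ζ k x| ≤ B := by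
    refine exists_unifBound _ fun k => ?_
    have hcs : HasCompactSupport (pd ζ k) := by
      apply hζcs.mono'
      intro x hx
      contrapose! hx
      simp [Function.mem_support, hpdζ0 k x hx]
    obtain ⟨C, hC⟩ := ((continuous_pd (hζsm.of_le one_le_two) k).abs).bounded_above_of_compact_support
      (hcs.comp_left (g := fun r : ℝ => |r|) abs_zero)
    exact ⟨C, fun x => by simpa using hC x⟩
  -- continuity helpers
  have ccomp : ∀ t : ℝ, Continuous fun x : EuclideanSpace ℝ (Fin (n + 1)) => x + t • e :=
    fun t => continuous_id.add continuous_const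
  have cu : ∀ (t : ℝ) (i : Fin m), Continuous fun x => u (x + t • e) i :=
    fun t i => (hui i).continuous.comp (ccomp t)
  have cpdu : ∀ (t : ℝ) (i : Fin m) (k : Fin (n + 1)),
      Continuous fun x => pd (fun y => u y i) k (x + t • e) :=
    fun t i k => (continuous_pd ((hui i).of_le one_le_two) k).comp (ccomp t)
  have cHp : ∀ (t : ℝ) (i : Fin m), Continuous fun x => Hp H i (u (x + t • e)) := by
    intro t i
    rw [Hp_eq_pd]
    exact (continuous_pd (hH.of_le one_le_two) i).comp (hu.continuous.comp (ccomp t))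
  have cζ : Continuous ζ := hζsm.continuous
  have cpdζ : ∀ k, Continuous (pd ζ k) := fun k => continuous_pd (hζsm.of_le one_le_two) k
  -- integrability of the two pieces
  have intA : ∀ (t : ℝ) (i : Fin m), Integrable (fun x =>
      (ζ x * ζ x) * ∑ k, (pd (fun y => u y i) k (x + t • e)) ^ 2) := by
    intro t i
    refine Continuous.integrable_of_hasCompactSupport
      ((cζ.mul cζ).mul (continuous_finset_sum _ fun k _ => (cpdu t i k).pow 2)) ?_
    apply hζcs.mono'
    intro x hx
    contrapose! hx
    have h0 : ζ x = 0 := image_eq_zero_of_notMem_tsupport hx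
    simp [Function.mem_support, h0]
  have intB : ∀ (t : ℝ) (i : Fin m), Integrable (fun x =>
      (u (x + t • e) i - a i) * (2 * ζ x * (∑ k, pd ζ k x * pd (fun y => u y i) k (x + t • e))
        + ζ x * ζ x * Hp H i (u (x + t • e)))) := by
    intro t i
    refine Continuous.integrable_of_hasCompactSupport
      (((cu t i).sub continuous_const).mul
        (((continuous_const.mul cζ).mul
            (continuous_finset_sum _ fun k _ => (cpdζ k).mul (cpdu t i k))).add
          ((cζ.mul cζ).mul (cHp t i)))) ?_
    apply hζcs.mono'
    intro x hx
    contrapose! hx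
    have h0 : ζ x = 0 := image_eq_zero_of_notMem_tsupport hx
    have h1 : ∀ k, pd ζ k x = 0 := fun k => hpdζ0 k x hx
    simp [Function.mem_support, h0, h1]
  have hxe : ∀ (x : EuclideanSpace ℝ (Fin (n + 1))) (t : ℝ),
      x + t • e = snocPt (WithLp.toLp 2 (fun j : Fin n => x j.castSucc)) (x (Fin.last n) + t) := by
    intro x t
    have hadd : ∀ (y z : EuclideanSpace ℝ (Fin (n + 1))) j, (y + z) j = y j + z j :=
      fun _ _ _ => rfl
    have hsmul : ∀ (c : ℝ) (z : EuclideanSpace ℝ (Fin (n + 1))) j, (c • z) j = c * z j :=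
      fun _ _ _ => rfl
    have hsP : ∀ (x' : EuclideanSpace ℝ (Fin n)) (s : ℝ) j,
        snocPt x' s j = Fin.snoc (α := fun _ => ℝ) x' s j := fun _ _ _ => rfl
    ext j
    refine Fin.lastCases ?_ ?_ j
    · rw [hadd, hsmul, hsP, Fin.snoc_last, he]
      simp [EuclideanSpace.single_apply]
    · intro j
      rw [hadd, hsmul, hsP, Fin.snoc_castSucc, he]
      simp [EuclideanSpace.single_apply, (Fin.castSucc_lt_last j).ne]
  have hcoord : ∀ (x : EuclideanSpace ℝ (Fin (n + 1))) (i : Fin m),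
      Tendsto (fun t : ℝ => u (x + t • e) i) atTop (nhds (a i)) := by
    intro x i
    have h1 : Tendsto (fun t : ℝ => x (Fin.last n) + t) atTop atTop :=
      tendsto_atTop_add_const_left _ _ tendsto_id
    have h2 := (hlim (WithLp.toLp 2 (fun j : Fin n => x j.castSucc)) i).comp h1
    refine h2.congr fun t => ?_
    simp only [Function.comp]
    rw [← hxe x t]
  -- the integration-by-parts identity
  have key : ∀ t : ℝ,
      ∫ x, (ζ x * ζ x) * (∑ i, ∑ k, (pd (fun y => u y i) k (x + t • e)) ^ 2)
        = - ∫ x, (∑ i, (u (x + t • e) i - a i) *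
            (2 * ζ x * (∑ k, pd ζ k x * pd (fun y => u y i) k (x + t • e))
              + ζ x * ζ x * Hp H i (u (x + t • e)))) := by
    intro t
    have hAB : ∀ i : Fin m, ∫ x,
        ((ζ x * ζ x) * (∑ k, (pd (fun y => u y i) k (x + t • e)) ^ 2)
          + (u (x + t • e) i - a i) *
            (2 * ζ x * (∑ k, pd ζ k x * pd (fun y => u y i) k (x + t • e))
              + ζ x * ζ x * Hp H i (u (x + t • e)))) = 0 := by
      intro i
      have hfC1 : ContDiff ℝ 1 (fun x => (ζ x * ζ x) * (u (x + t • e) i - a i)) :=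
        ((hζsm.mul hζsm).mul ((hw t i).sub contDiff_const)).of_le one_le_two
      have hfCS : HasCompactSupport (fun x => (ζ x * ζ x) * (u (x + t • e) i - a i)) := by
        apply hζcs.mono'
        intro x hx
        contrapose! hx
        have h0 : ζ x = 0 := image_eq_zero_of_notMem_tsupport hx
        simp [Function.mem_support, h0]
      have h0 := ibp_lemma hfC1 hfCS (hw t i)
      rw [← h0]
      apply integral_congr_ae
      filter_upwards with x
      have hgd : DifferentiableAt ℝ (fun y => u (y + t • e) i - a i) x :=
        (((hw t i).differentiable two_ne_zero) x).sub_const _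
      have hζζ : DifferentiableAt ℝ (fun y => ζ y * ζ y) x := (hζd x).mul (hζd x)
      have hpdf : ∀ k, pd (fun y => (ζ y * ζ y) * (u (y + t • e) i - a i)) k x
          = (pd ζ k x * ζ x + ζ x * pd ζ k x) * (u (x + t • e) i - a i)
            + (ζ x * ζ x) * pd (fun y => u y i) k (x + t • e) := by
        intro k
        rw [pd_mul hζζ hgd k, pd_mul (hζd x) (hζd x) k]
        congr 1
        congr 1
        rw [show pd (fun y => u (y + t • e) i - a i) k x
            = pd (fun y => u (y + t • e) i) k x by unfold pd; rw [fderiv_sub_const]]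
        rw [hpdw t i k x]
      have hsummand : ∀ k : Fin (n + 1),
          pd (fun y => (ζ y * ζ y) * (u (y + t • e) i - a i)) k x
              * pd (fun y => u (y + t • e) i) k x
          = ((u (x + t • e) i - a i) * (2 * ζ x))
              * (pd ζ k x * pd (fun y => u y i) k (x + t • e))
            + (ζ x * ζ x) * (pd (fun y => u y i) k (x + t • e)) ^ 2 := by
        intro k
        rw [hpdf k, hpdw t i k x]
        ring
      rw [Finset.sum_congr rfl fun k _ => hsummand k, Finset.sum_add_distrib,
        ← Finset.mul_sum, ← Finset.mul_sum, hlapw t i x]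
      ring
    have hAeqB : ∀ i : Fin m,
        (∫ x, (ζ x * ζ x) * (∑ k, (pd (fun y => u y i) k (x + t • e)) ^ 2))
        = - ∫ x, (u (x + t • e) i - a i) *
            (2 * ζ x * (∑ k, pd ζ k x * pd (fun y => u y i) k (x + t • e))
              + ζ x * ζ x * Hp H i (u (x + t • e))) := by
      intro i
      have := hAB i
      rw [integral_add (intA t i) (intB t i)] at this
      linarith
    calc ∫ x, (ζ x * ζ x) * (∑ i, ∑ k, (pd (fun y => u y i) k (x + t • e)) ^ 2)
        = ∫ x, ∑ i, (ζ x * ζ x) * (∑ k, (pd (fun y => u y i) k (x + t • e)) ^ 2) := by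
          apply integral_congr_ae
          filter_upwards with x
          rw [Finset.mul_sum]
      _ = ∑ i, ∫ x, (ζ x * ζ x) * (∑ k, (pd (fun y => u y i) k (x + t • e)) ^ 2) :=
          integral_finset_sum _ fun i _ => intA t i
      _ = ∑ i, - ∫ x, (u (x + t • e) i - a i) *
            (2 * ζ x * (∑ k, pd ζ k x * pd (fun y => u y i) k (x + t • e))
              + ζ x * ζ x * Hp H i (u (x + t • e))) :=
          Finset.sum_congr rfl fun i _ => hAeqB i
      _ = - ∑ i, ∫ x, (u (x + t • e) i - a i) *
            (2 * ζ x * (∑ k, pd ζ k x * pd (fun y => u y i) k (x + t • e))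
              + ζ x * ζ x * Hp H i (u (x + t • e))) := by rw [Finset.sum_neg_distrib]
      _ = - ∫ x, ∑ i, (u (x + t • e) i - a i) *
            (2 * ζ x * (∑ k, pd ζ k x * pd (fun y => u y i) k (x + t • e))
              + ζ x * ζ x * Hp H i (u (x + t • e))) := by
          rw [integral_finset_sum _ fun i _ => intB t i]

  -- the right-hand side tends to zero
  have hRHS : Tendsto (fun t : ℝ => ∫ x, (∑ i, (u (x + t • e) i - a i) *
      (2 * ζ x * (∑ k, pd ζ k x * pd (fun y => u y i) k (x + t • e))
        + ζ x * ζ x * Hp H i (u (x + t • e))))) atTop (nhds 0) := by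
    set Cψ : ℝ := 2 * ((↑(n + 1) : ℝ) * (Bζ * Bg)) + BH with hCψ
    have hCψ0 : 0 ≤ Cψ := by
      have : (0:ℝ) ≤ (↑(n + 1) : ℝ) := by positivity
      have h1 : 0 ≤ Bζ * Bg := mul_nonneg hBζ0 hBg0
      have h2 : 0 ≤ (↑(n + 1) : ℝ) * (Bζ * Bg) := mul_nonneg this h1
      linarith
    have hψbd : ∀ (t : ℝ) (i : Fin m) (x : EuclideanSpace ℝ (Fin (n + 1))),
        |2 * ζ x * (∑ k, pd ζ k x * pd (fun y => u y i) k (x + t • e))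
          + ζ x * ζ x * Hp H i (u (x + t • e))| ≤ Cψ := by
      intro t i x
      have hsum : |∑ k, pd ζ k x * pd (fun y => u y i) k (x + t • e)|
          ≤ (↑(n + 1) : ℝ) * (Bζ * Bg) := by
        refine (Finset.abs_sum_le_sum_abs _ _).trans ?_
        have : ∀ k : Fin (n + 1), |pd ζ k x * pd (fun y => u y i) k (x + t • e)| ≤ Bζ * Bg := by
          intro k
          rw [abs_mul]
          exact mul_le_mul (hBζ k x) (hpdu i k _) (abs_nonneg _) hBζ0
        refine (Finset.sum_le_sum fun k _ => this k).trans ?_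
        rw [Finset.sum_const, Finset.card_univ, Fintype.card_fin, nsmul_eq_mul]
      have hζx : |ζ x| ≤ 1 := by rw [abs_of_nonneg (hζ0 x)]; exact hζle1 x
      calc |2 * ζ x * (∑ k, pd ζ k x * pd (fun y => u y i) k (x + t • e))
            + ζ x * ζ x * Hp H i (u (x + t • e))|
          ≤ |2 * ζ x * (∑ k, pd ζ k x * pd (fun y => u y i) k (x + t • e))|
            + |ζ x * ζ x * Hp H i (u (x + t • e))| := abs_add_le _ _
        _ ≤ 2 * ((↑(n + 1) : ℝ) * (Bζ * Bg)) + BH := by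
            refine add_le_add ?_ ?_
            · rw [abs_mul, abs_mul, abs_two]
              calc 2 * |ζ x| * |∑ k, pd ζ k x * pd (fun y => u y i) k (x + t • e)|
                  ≤ 2 * 1 * ((↑(n + 1) : ℝ) * (Bζ * Bg)) := by
                    refine mul_le_mul (by linarith) hsum (abs_nonneg _) (by norm_num)
                _ = 2 * ((↑(n + 1) : ℝ) * (Bζ * Bg)) := by ring
            · rw [abs_mul, abs_mul]
              calc |ζ x| * |ζ x| * |Hp H i (u (x + t • e))|
                  ≤ 1 * 1 * BH := by
                    refine mul_le_mul (mul_le_mul hζx hζx (abs_nonneg _) zero_le_one)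
                      (hBH i _) (abs_nonneg _) (by norm_num)
                _ = BH := by ring
    set Ca : ℝ := ∑ j, |a j| with hCa
    have hCa0 : 0 ≤ Ca := Finset.sum_nonneg fun _ _ => abs_nonneg _
    have haj : ∀ j : Fin m, |a j| ≤ Ca :=
      fun j => Finset.single_le_sum (f := fun j => |a j|) (fun _ _ => abs_nonneg _)
        (Finset.mem_univ j)
    set M : ℝ := (↑m : ℝ) * ((Bu + Ca) * Cψ) with hM
    have hphibd : ∀ (t : ℝ) (x : EuclideanSpace ℝ (Fin (n + 1))),
        |∑ i, (u (x + t • e) i - a i) *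
          (2 * ζ x * (∑ k, pd ζ k x * pd (fun y => u y i) k (x + t • e))
            + ζ x * ζ x * Hp H i (u (x + t • e)))| ≤ M := by
      intro t x
      refine (Finset.abs_sum_le_sum_abs _ _).trans ?_
      have hterm : ∀ i : Fin m, |(u (x + t • e) i - a i) *
          (2 * ζ x * (∑ k, pd ζ k x * pd (fun y => u y i) k (x + t • e))
            + ζ x * ζ x * Hp H i (u (x + t • e)))| ≤ (Bu + Ca) * Cψ := by
        intro i
        rw [abs_mul]
        refine mul_le_mul ?_ (hψbd t i x) (abs_nonneg _) (by linarith)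
        calc |u (x + t • e) i - a i| ≤ |u (x + t • e) i| + |a i| := abs_sub _ _
          _ ≤ Bu + Ca := add_le_add (hBu i _) (haj i)
      refine (Finset.sum_le_sum fun i _ => hterm i).trans ?_
      rw [Finset.sum_const, Finset.card_univ, Fintype.card_fin, nsmul_eq_mul, hM]
    have hlim0 : ∀ x : EuclideanSpace ℝ (Fin (n + 1)),
        Tendsto (fun t : ℝ => ∑ i, (u (x + t • e) i - a i) *
          (2 * ζ x * (∑ k, pd ζ k x * pd (fun y => u y i) k (x + t • e))
            + ζ x * ζ x * Hp H i (u (x + t • e)))) atTop (nhds 0) := by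
      intro x
      have : Tendsto (fun t : ℝ => ∑ i : Fin m, (fun i t => (u (x + t • e) i - a i) *
          (2 * ζ x * (∑ k, pd ζ k x * pd (fun y => u y i) k (x + t • e))
            + ζ x * ζ x * Hp H i (u (x + t • e)))) i t) atTop (nhds (∑ i : Fin m, 0)) := by
        refine tendsto_finset_sum _ fun i _ => ?_
        have hb1 : ∀ t : ℝ, ‖(u (x + t • e) i - a i) *
            (2 * ζ x * (∑ k, pd ζ k x * pd (fun y => u y i) k (x + t • e))
              + ζ x * ζ x * Hp H i (u (x + t • e)))‖
            ≤ |u (x + t • e) i - a i| * Cψ := by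
          intro t
          rw [Real.norm_eq_abs, abs_mul]
          exact mul_le_mul_of_nonneg_left (hψbd t i x) (abs_nonneg _)
        have hb2 : Tendsto (fun t : ℝ => |u (x + t • e) i - a i| * Cψ) atTop (nhds 0) := by
          have h1 : Tendsto (fun t : ℝ => |u (x + t • e) i - a i|) atTop (nhds 0) := by
            have := ((hcoord x i).sub_const (a i)).abs
            simpa using this
          simpa using h1.mul_const Cψ
        exact squeeze_zero_norm hb1 hb2
      simpa using this
    have hmeas : ∀ᶠ t : ℝ in atTop, AEStronglyMeasurable (fun x =>
        ∑ i, (u (x + t • e) i - a i) *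
          (2 * ζ x * (∑ k, pd ζ k x * pd (fun y => u y i) k (x + t • e))
            + ζ x * ζ x * Hp H i (u (x + t • e)))) volume := by
      filter_upwards with t
      refine Continuous.aestronglyMeasurable ?_
      refine continuous_finset_sum _ fun i _ => ?_
      exact ((cu t i).sub continuous_const).mul
        (((continuous_const.mul cζ).mul
            (continuous_finset_sum _ fun k _ => (cpdζ k).mul (cpdu t i k))).add
          ((cζ.mul cζ).mul (cHp t i)))
    have hbound : ∀ᶠ t : ℝ in atTop, ∀ᵐ x, ‖∑ i, (u (x + t • e) i - a i) *
        (2 * ζ x * (∑ k, pd ζ k x * pd (fun y => u y i) k (x + t • e))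
          + ζ x * ζ x * Hp H i (u (x + t • e)))‖
        ≤ (tsupport ζ).indicator (fun _ => M) x := by
      filter_upwards with t
      filter_upwards with x
      by_cases hx : x ∈ tsupport ζ
      · rw [Set.indicator_of_mem hx, Real.norm_eq_abs]
        exact hphibd t x
      · rw [Set.indicator_of_notMem hx, Real.norm_eq_abs]
        have h0 : ζ x = 0 := image_eq_zero_of_notMem_tsupport hx
        have h1 : ∀ k, pd ζ k x = 0 := fun k => hpdζ0 k x hx
        have : ∀ i : Fin m, (u (x + t • e) i - a i) *
            (2 * ζ x * (∑ k, pd ζ k x * pd (fun y => u y i) k (x + t • e))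
              + ζ x * ζ x * Hp H i (u (x + t • e))) = 0 := by
          intro i; simp [h0, h1]
        rw [Finset.sum_congr rfl fun i _ => this i]
        simp
    have hint : Integrable ((tsupport ζ).indicator (fun _ => M)) volume := by
      rw [integrable_indicator_iff (isClosed_tsupport ζ).measurableSet]
      exact integrableOn_const hζcs.measure_lt_top.ne
    have := tendsto_integral_filter_of_dominated_convergence (μ := volume)
      (F := fun t x => ∑ i, (u (x + t • e) i - a i) *
        (2 * ζ x * (∑ k, pd ζ k x * pd (fun y => u y i) k (x + t • e))
          + ζ x * ζ x * Hp H i (u (x + t • e))))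
      (f := fun _ => (0 : ℝ)) ((tsupport ζ).indicator (fun _ => M)) hmeas hbound hint
      (by filter_upwards with x using hlim0 x)
    simpa using this

  have hG : Tendsto (fun t : ℝ => ∫ x,
      (ζ x * ζ x) * (∑ i, ∑ k, (pd (fun y => u y i) k (x + t • e)) ^ 2)) atTop (nhds 0) := by
    simp only [key]
    simpa using hRHS.neg
  -- squeeze for the ball integral of the gradient part
  have hball : Tendsto (fun t : ℝ => ∫ x in ball (0 : EuclideanSpace ℝ (Fin (n + 1))) R,
      (∑ i, ∑ k, (pd (fun y => u y i) k (x + t • e)) ^ 2)) atTop (nhds 0) := by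
    have hPnn : ∀ (t : ℝ) x, 0 ≤ ∑ i, ∑ k, (pd (fun y => u y i) k (x + t • e)) ^ 2 :=
      fun t x => Finset.sum_nonneg fun i _ => Finset.sum_nonneg fun k _ => sq_nonneg _
    have intζP : ∀ t : ℝ, Integrable (fun x =>
        (ζ x * ζ x) * ∑ i, ∑ k, (pd (fun y => u y i) k (x + t • e)) ^ 2) := by
      intro t
      have h1 := integrable_finset_sum (μ := volume) Finset.univ fun i (_ : i ∈ Finset.univ) =>
        intA t i
      refine h1.congr ?_
      filter_upwards with x
      rw [Finset.mul_sum]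
    have h0 : ∀ t : ℝ, 0 ≤ ∫ x in ball (0 : EuclideanSpace ℝ (Fin (n + 1))) R,
        (∑ i, ∑ k, (pd (fun y => u y i) k (x + t • e)) ^ 2) :=
      fun t => setIntegral_nonneg measurableSet_ball fun x _ => hPnn t x
    have h1 : ∀ t : ℝ, (∫ x in ball (0 : EuclideanSpace ℝ (Fin (n + 1))) R,
        (∑ i, ∑ k, (pd (fun y => u y i) k (x + t • e)) ^ 2))
        ≤ ∫ x, (ζ x * ζ x) * (∑ i, ∑ k, (pd (fun y => u y i) k (x + t • e)) ^ 2) := by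
      intro t
      have heq : (∫ x in ball (0 : EuclideanSpace ℝ (Fin (n + 1))) R,
          (∑ i, ∑ k, (pd (fun y => u y i) k (x + t • e)) ^ 2))
          = ∫ x in ball (0 : EuclideanSpace ℝ (Fin (n + 1))) R,
            (ζ x * ζ x) * (∑ i, ∑ k, (pd (fun y => u y i) k (x + t • e)) ^ 2) := by
        refine setIntegral_congr_fun measurableSet_ball fun x hx => ?_
        rw [hζ1 x (ball_subset_closedBall hx)]
        ring
      rw [heq]
      refine setIntegral_le_integral (intζP t) ?_
      filter_upwards with x using mul_nonneg (mul_nonneg (hζ0 x) (hζ0 x)) (hPnn t x)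
    exact squeeze_zero h0 h1 hG
  -- the potential part tends to zero
  have hpot : Tendsto (fun t : ℝ => ∫ x in ball (0 : EuclideanSpace ℝ (Fin (n + 1))) R,
      (H (u (x + t • e)) - H a)) atTop (nhds 0) := by
    have hva : ∀ x : EuclideanSpace ℝ (Fin (n + 1)),
        Tendsto (fun t : ℝ => u (x + t • e)) atTop (nhds a) := by
      intro x
      have h1 : Tendsto (fun t : ℝ => (fun i => u (x + t • e) i : Fin m → ℝ)) atTop
          (nhds (fun i => a i)) := tendsto_pi_nhds.2 fun i => hcoord x i
      have h2 := ((EuclideanSpace.equiv (Fin m) ℝ).symm.continuous.tendsto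
        (fun i => a i)).comp h1
      exact h2
    have hHlim : ∀ x : EuclideanSpace ℝ (Fin (n + 1)),
        Tendsto (fun t : ℝ => H (u (x + t • e)) - H a) atTop (nhds 0) := by
      intro x
      have := ((hH.continuous.tendsto a).comp (hva x)).sub_const (H a)
      simpa using this
    have hmeas : ∀ᶠ t : ℝ in atTop, AEStronglyMeasurable
        (fun x => H (u (x + t • e)) - H a)
        (volume.restrict (ball (0 : EuclideanSpace ℝ (Fin (n + 1))) R)) := by
      filter_upwards with t
      exact ((hH.continuous.comp (hu.continuous.comp (ccomp t))).sub
        continuous_const).aestronglyMeasurable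
    have hbound : ∀ᶠ t : ℝ in atTop, ∀ᵐ x ∂(volume.restrict
        (ball (0 : EuclideanSpace ℝ (Fin (n + 1))) R)),
        ‖H (u (x + t • e)) - H a‖ ≤ BH2 + |H a| := by
      filter_upwards with t
      filter_upwards with x
      rw [Real.norm_eq_abs]
      exact (abs_sub _ _).trans (add_le_add (hBH2 _) le_rfl)
    have hint : Integrable (fun _ => BH2 + |H a|) (volume.restrict
        (ball (0 : EuclideanSpace ℝ (Fin (n + 1))) R)) :=
      integrableOn_const measure_ball_lt_top.ne
    have := tendsto_integral_filter_of_dominated_convergence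
      (μ := volume.restrict (ball (0 : EuclideanSpace ℝ (Fin (n + 1))) R))
      (F := fun (t : ℝ) x => H (u (x + t • e)) - H a) (f := fun _ => (0 : ℝ))
      (fun _ => BH2 + |H a|) hmeas hbound hint
      (by filter_upwards with x using hHlim x)
    simpa using this
  -- combine
  have hgradrw : ∀ (t : ℝ) (x : EuclideanSpace ℝ (Fin (n + 1))),
      (∑ i, ‖gradient (fun y => u (y + t • e) i) x‖ ^ 2)
      = ∑ i, ∑ k, (pd (fun y => u y i) k (x + t • e)) ^ 2 := by
    intro t x
    refine Finset.sum_congr rfl fun i _ => ?_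
    rw [norm_gradient_sq]
    exact Finset.sum_congr rfl fun k _ => by rw [hpdw t i k x]
  have intP : ∀ t : ℝ, IntegrableOn (fun x => (1 / 2 : ℝ) *
      ∑ i, ∑ k, (pd (fun y => u y i) k (x + t • e)) ^ 2)
      (ball (0 : EuclideanSpace ℝ (Fin (n + 1))) R) volume := by
    intro t
    have hc : Continuous fun x => (1 / 2 : ℝ) *
        ∑ i, ∑ k, (pd (fun y => u y i) k (x + t • e)) ^ 2 :=
      continuous_const.mul (continuous_finset_sum _ fun i _ =>
        continuous_finset_sum _ fun k _ => (cpdu t i k).pow 2)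
    exact (hc.continuousOn.integrableOn_compact (isCompact_closedBall _ _)).mono_set
      ball_subset_closedBall
  have intH : ∀ t : ℝ, IntegrableOn (fun x => H (u (x + t • e)) - H a)
      (ball (0 : EuclideanSpace ℝ (Fin (n + 1))) R) volume := by
    intro t
    have hc : Continuous fun x => H (u (x + t • e)) - H a :=
      (hH.continuous.comp (hu.continuous.comp (ccomp t))).sub continuous_const
    exact (hc.continuousOn.integrableOn_compact (isCompact_closedBall _ _)).mono_set
      ball_subset_closedBall
  have hsplit : ∀ t : ℝ,
      (∫ x in ball (0 : EuclideanSpace ℝ (Fin (n + 1))) R,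
        ((1 / 2) * ∑ i, ‖gradient (fun y => u (y + t • e) i) x‖ ^ 2
          + H (u (x + t • e)) - H a))
      = (1 / 2) * (∫ x in ball (0 : EuclideanSpace ℝ (Fin (n + 1))) R,
          (∑ i, ∑ k, (pd (fun y => u y i) k (x + t • e)) ^ 2))
        + ∫ x in ball (0 : EuclideanSpace ℝ (Fin (n + 1))) R, (H (u (x + t • e)) - H a) := by
    intro t
    have heq : (∫ x in ball (0 : EuclideanSpace ℝ (Fin (n + 1))) R,
        ((1 / 2) * ∑ i, ‖gradient (fun y => u (y + t • e) i) x‖ ^ 2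
          + H (u (x + t • e)) - H a))
        = ∫ x in ball (0 : EuclideanSpace ℝ (Fin (n + 1))) R,
          ((1 / 2) * (∑ i, ∑ k, (pd (fun y => u y i) k (x + t • e)) ^ 2)
            + (H (u (x + t • e)) - H a)) := by
      refine setIntegral_congr_fun measurableSet_ball fun x _ => ?_
      rw [hgradrw t x]
      ring
    rw [heq, integral_add (intP t) (intH t), integral_const_mul]
  simp only [hsplit]
  have hfin := (hball.const_mul (1 / 2 : ℝ)).add hpot
  simpa using hfin
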